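/- Let X ∈ ℝ^{n₁×r} have i.i.d. N(0,1) entries with r > n₁, and let S ∈ ℝ^{r×r} be a fixed positive-definite diagonal matrix. Then almost surely tr((XS²Xᵀ)^{-1} X S⁴ Xᵀ (XS²Xᵀ)^{-1}) ≥ tr((XXᵀ)^{-1}). In particular, E of the left side is at least E tr((XXᵀ)^{-1}). -/
import Mathlib

open Matrix MeasureTheory ProbabilityTheory

variable {n₁ r : ℕ}

lemma aux_mulVec_zero (M : Matrix (Fin n₁) (Fin r) ℝ) (d : Fin r → ℝ) (hd : ∀ k, 0 < d k)
    (v : Fin n₁ → ℝ) :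
    (M * Matrix.diagonal d * Mᵀ).mulVec v = 0 ↔ Mᵀ.mulVec v = 0 := by
  constructor
  · intro h
    set w := Mᵀ.mulVec v with hw
    have hexp : v ⬝ᵥ (M * Matrix.diagonal d * Mᵀ).mulVec v = ∑ k, d k * (w k) ^ 2 := by
      rw [← Matrix.mulVec_mulVec, Matrix.dotProduct_mulVec, ← Matrix.mulVec_transpose,
        Matrix.transpose_mul, Matrix.diagonal_transpose, ← Matrix.mulVec_mulVec, ← hw]
      simp only [dotProduct, Matrix.mulVec_diagonal]
      exact Finset.sum_congr rfl fun k _ => by ring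
    have h2 : ∑ k, d k * (w k) ^ 2 = 0 := by rw [← hexp, h]; simp
    have h3 : ∀ k ∈ Finset.univ, d k * (w k) ^ 2 = 0 := by
      intro k _
      have := (Finset.sum_eq_zero_iff_of_nonneg (fun k _ =>
        mul_nonneg (hd k).le (sq_nonneg _))).mp h2
      exact this k (Finset.mem_univ k)
    funext k
    have := h3 k (Finset.mem_univ k)
    have : (w k) ^ 2 = 0 := by
      rcases mul_eq_zero.mp this with h' | h'
      · exact absurd h' (hd k).ne'
      · exact h'
    simpa using pow_eq_zero_iff (n := 2) (by norm_num) |>.mp this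
  · intro h
    rw [← Matrix.mulVec_mulVec, ← Matrix.mulVec_mulVec, h]
    simp

lemma aux_det_zero_iff (M : Matrix (Fin n₁) (Fin r) ℝ) (d : Fin r → ℝ) (hd : ∀ k, 0 < d k) :
    (M * Matrix.diagonal d * Mᵀ).det = 0 ↔ ∃ v ≠ 0, Mᵀ.mulVec v = 0 := by
  rw [← Matrix.exists_mulVec_eq_zero_iff]
  exact exists_congr fun v => and_congr_right fun _ => aux_mulVec_zero M d hd v

lemma trace_self_mul_transpose_nonneg {m : Type*} [Fintype m]
    (L : Matrix (Fin n₁) m ℝ) : 0 ≤ (L * Lᵀ).trace := by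
  rw [Matrix.trace]
  refine Finset.sum_nonneg fun i _ => ?_
  rw [Matrix.diag_apply, Matrix.mul_apply]
  exact Finset.sum_nonneg fun j _ => by rw [Matrix.transpose_apply]; exact mul_self_nonneg _

lemma key_ineq (M : Matrix (Fin n₁) (Fin r) ℝ) (S : Fin r → ℝ) (hS : ∀ k, 0 < S k) :
    Matrix.trace ((M * Mᵀ)⁻¹) ≤ Matrix.trace
      ((M * Matrix.diagonal (fun k => S k ^ 2) * Mᵀ)⁻¹ *
        (M * Matrix.diagonal (fun k => S k ^ 4) * Mᵀ) *
        (M * Matrix.diagonal (fun k => S k ^ 2) * Mᵀ)⁻¹) := by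
  set D₂ := Matrix.diagonal (fun k => S k ^ 2) with hD₂
  set C := M * Mᵀ with hC
  set A := M * D₂ * Mᵀ with hA
  set B := M * Matrix.diagonal (fun k => S k ^ 4) * Mᵀ with hB
  have hCrw : C = M * Matrix.diagonal (fun _ : Fin r => (1:ℝ)) * Mᵀ := by
    simp [hC, Matrix.diagonal_one]
  by_cases hdet : C.det = 0
  · have hAdet : A.det = 0 := by
      rw [hA, aux_det_zero_iff M _ (fun k => pow_pos (hS k) 2)]
      rw [hCrw, aux_det_zero_iff M _ (fun _ => one_pos)] at hdet
      exact hdet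
    rw [Matrix.nonsing_inv_apply_not_isUnit _ (by simpa [isUnit_iff_ne_zero] using hdet),
      Matrix.nonsing_inv_apply_not_isUnit _ (by simpa [isUnit_iff_ne_zero] using hAdet)]
    simp
  · have hAdet : A.det ≠ 0 := by
      intro h
      rw [hA, aux_det_zero_iff M _ (fun k => pow_pos (hS k) 2)] at h
      rw [hCrw, aux_det_zero_iff M _ (fun _ => one_pos)] at hdet
      exact hdet h
    have hCu : IsUnit C.det := isUnit_iff_ne_zero.mpr hdet
    have hAu : IsUnit A.det := isUnit_iff_ne_zero.mpr hAdet
    have hCsym : Cᵀ = C := by rw [hC, Matrix.transpose_mul, Matrix.transpose_transpose]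
    have hAsym : Aᵀ = A := by
      rw [hA, Matrix.transpose_mul, Matrix.transpose_mul, Matrix.transpose_transpose,
        Matrix.diagonal_transpose, Matrix.mul_assoc]
    have hCinvsym : (C⁻¹)ᵀ = C⁻¹ := by rw [Matrix.transpose_nonsing_inv, hCsym]
    have hAinvsym : (A⁻¹)ᵀ = A⁻¹ := by rw [Matrix.transpose_nonsing_inv, hAsym]
    set P := Mᵀ * C⁻¹ * M with hP
    have hPsym : Pᵀ = P := by
      rw [hP, Matrix.transpose_mul, Matrix.transpose_mul, Matrix.transpose_transpose,
        hCinvsym, Matrix.mul_assoc]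
    have hPP : P * P = P := by
      have h1 : C⁻¹ * C = 1 := Matrix.nonsing_inv_mul _ hCu
      have h2 : P * P = Mᵀ * (C⁻¹ * ((M * Mᵀ) * (C⁻¹ * M))) := by
        simp only [hP, Matrix.mul_assoc]
      rw [h2, ← hC, ← Matrix.mul_assoc C, Matrix.mul_nonsing_inv _ hCu, Matrix.one_mul,
        hP, Matrix.mul_assoc]
    set K := M * D₂ * (1 - P) with hK
    have hD₂sq : D₂ * D₂ = Matrix.diagonal (fun k => S k ^ 4) := by
      rw [hD₂, Matrix.diagonal_mul_diagonal]
      congr 1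
      funext k
      ring
    have hKK : K * Kᵀ = B - A * C⁻¹ * A := by
      have h1P : (1 - P)ᵀ = 1 - P := by rw [Matrix.transpose_sub, Matrix.transpose_one, hPsym]
      have h1P2 : (1 - P) * (1 - P) = 1 - P := by
        simp only [Matrix.mul_sub, Matrix.sub_mul, Matrix.one_mul, Matrix.mul_one, hPP]
        abel
      have hKT : Kᵀ = (1 - P) * (D₂ * Mᵀ) := by
        rw [hK, Matrix.transpose_mul, Matrix.transpose_mul, h1P]
        congr 2
        rw [hD₂, Matrix.diagonal_transpose]
      rw [hKT, hK]
      calc M * D₂ * (1 - P) * ((1 - P) * (D₂ * Mᵀ))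
          = M * D₂ * ((1 - P) * (1 - P)) * (D₂ * Mᵀ) := by
            simp only [Matrix.mul_assoc]
        _ = M * D₂ * (1 - P) * (D₂ * Mᵀ) := by rw [h1P2]
        _ = M * (D₂ * D₂) * Mᵀ - M * D₂ * P * (D₂ * Mᵀ) := by
            rw [Matrix.mul_sub, Matrix.sub_mul]
            simp only [Matrix.mul_one, Matrix.mul_assoc]
        _ = B - A * C⁻¹ * A := by
            rw [hD₂sq, ← hB, hP, hA]
            simp only [Matrix.mul_assoc]
    have hfinal : (A⁻¹ * K) * (A⁻¹ * K)ᵀ = A⁻¹ * B * A⁻¹ - C⁻¹ := by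
      have hAiA : A⁻¹ * A = 1 := Matrix.nonsing_inv_mul _ hAu
      have hAAi : A * A⁻¹ = 1 := Matrix.mul_nonsing_inv _ hAu
      have hcancel : A⁻¹ * (A * C⁻¹ * A) * A⁻¹ = C⁻¹ := by
        calc A⁻¹ * (A * C⁻¹ * A) * A⁻¹ = (A⁻¹ * A) * (C⁻¹ * (A * A⁻¹)) := by
              simp only [Matrix.mul_assoc]
          _ = C⁻¹ := by rw [hAiA, hAAi, Matrix.one_mul, Matrix.mul_one]
      calc (A⁻¹ * K) * (A⁻¹ * K)ᵀ = A⁻¹ * (K * Kᵀ) * A⁻¹ := by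
            rw [Matrix.transpose_mul, hAinvsym]
            simp only [Matrix.mul_assoc]
        _ = A⁻¹ * B * A⁻¹ - A⁻¹ * (A * C⁻¹ * A) * A⁻¹ := by
            rw [hKK, Matrix.mul_sub, Matrix.sub_mul]
        _ = A⁻¹ * B * A⁻¹ - C⁻¹ := by rw [hcancel]
    have htr : 0 ≤ ((A⁻¹ * K) * (A⁻¹ * K)ᵀ).trace := trace_self_mul_transpose_nonneg _
    rw [hfinal, Matrix.trace_sub] at htr
    linarith

/-- With `X` an `n₁ × r` i.i.d. Gaussian matrix (`r > n₁`) and `S` a fixed positive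
diagonal matrix, almost surely
`tr((XS²Xᵀ)⁻¹ XS⁴Xᵀ (XS²Xᵀ)⁻¹) ≥ tr((XXᵀ)⁻¹)`, hence the same holds in expectation. -/
theorem stmt12 {Ω : Type*} [MeasurableSpace Ω] (μ : Measure Ω) [IsProbabilityMeasure μ]
    {n₁ r : ℕ} (hr : n₁ < r) (X : Ω → Fin n₁ → Fin r → ℝ)
    (hX : Measure.map X μ =
      Measure.pi fun _ : Fin n₁ => Measure.pi fun _ : Fin r => gaussianReal 0 1)
    (S : Fin r → ℝ) (hS : ∀ k, 0 < S k)
    (f g : Matrix (Fin n₁) (Fin r) ℝ → ℝ)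
    (hf : ∀ M, f M = Matrix.trace
      ((M * Matrix.diagonal (fun k => S k ^ 2) * Mᵀ)⁻¹ *
        (M * Matrix.diagonal (fun k => S k ^ 4) * Mᵀ) *
        (M * Matrix.diagonal (fun k => S k ^ 2) * Mᵀ)⁻¹))
    (hg : ∀ M, g M = Matrix.trace ((M * Mᵀ)⁻¹)) :
    (∀ᵐ ω ∂μ, g (Matrix.of (X ω)) ≤ f (Matrix.of (X ω))) ∧
    (∫⁻ ω, ENNReal.ofReal (g (Matrix.of (X ω))) ∂μ ≤
      ∫⁻ ω, ENNReal.ofReal (f (Matrix.of (X ω))) ∂μ) := by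
  have hpt : ∀ M : Matrix (Fin n₁) (Fin r) ℝ, g M ≤ f M := by
    intro M
    rw [hf, hg]
    exact key_ineq M S hS
  exact ⟨Filter.Eventually.of_forall fun ω => hpt _,
    lintegral_mono fun ω => ENNReal.ofReal_le_ofReal (hpt _)⟩
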